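/- Let T > 0. Let h : ℝ × ℝ → ℝ be continuous, T-periodic in the first variable, and satisfy (h0) and (h1). Let a : ℝ → ℝ be a continuous T-periodic function satisfying (a#). Let g : [0,+∞) → [0,+∞) satisfy (g*), be continuously differentiable in a right neighborhood of zero with limsup_{s→0⁺} g'(s)·s/g(s) ≤ C_g for some constant C_g ≥ 0, and satisfy: for every K ∈ ℝ, lim_{s→0⁺} h(t, K g(s))/s = 0 uniformly in t ∈ ℝ. Then there exists r₀ > 0 such that for all r ∈ (0, r₀] and all ϑ ∈ (0,1], there is no T-periodic solution (u,v) of the system u' = ϑ h(t,v), v' = -ϑ a(t) g(u) with u(t) > 0 for all t ∈ ℝ and max_t u(t) = r. -/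

import Mathlib

open MeasureTheory Set Filter

noncomputable section

/-- `(u, v)` is a `T`-periodic solution of the planar system `u' = F t (v t)`,
`v' = G t (u t)`: both components are continuous, `T`-periodic, and are primitives
(in the sense of the integral form, equivalent to absolute continuity plus the
differential equations holding almost everywhere) of the right-hand sides. -/
def IsPeriodicSol (T : ℝ) (F G : ℝ → ℝ → ℝ) (u v : ℝ → ℝ) : Prop :=
  Continuous u ∧ Continuous v ∧
  Function.Periodic u T ∧ Function.Periodic v T ∧
  (∀ t₁ t₂ : ℝ, IntervalIntegrable (fun s => F s (v s)) volume t₁ t₂) ∧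
  (∀ t₁ t₂ : ℝ, IntervalIntegrable (fun s => G s (u s)) volume t₁ t₂) ∧
  (∀ t : ℝ, u t = u 0 + ∫ s in (0:ℝ)..t, F s (v s)) ∧
  (∀ t : ℝ, v t = v 0 + ∫ s in (0:ℝ)..t, G s (u s))


private lemma periodic_max {f : ℝ → ℝ} {T : ℝ} (hT : 0 < T) (hf : Continuous f)
    (hp : Function.Periodic f T) : ∃ t₀, ∀ t, f t ≤ f t₀ := by
  obtain ⟨t₀, -, ht₀⟩ := isCompact_Icc.exists_isMaxOn (nonempty_Icc.2 hT.le) (hf.continuousOn (s := Icc (0:ℝ) T))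
  refine ⟨t₀, fun t => ?_⟩
  set n : ℤ := ⌊t / T⌋ with hn
  have h1 : ((n:ℝ)) * T ≤ t := by
    have := Int.floor_le (t / T)
    calc (n:ℝ) * T ≤ (t/T) * T := by nlinarith
    _ = t := by field_simp
  have h2 : t < ((n:ℝ)+1) * T := by
    have := Int.lt_floor_add_one (t / T)
    calc t = (t/T)*T := by field_simp
    _ < ((n:ℝ)+1)*T := by nlinarith
  have hmem : t - (n:ℝ) * T ∈ Icc (0:ℝ) T := ⟨by linarith, by nlinarith⟩
  have heq : f (t - (n:ℝ) * T) = f t := hp.sub_int_mul_eq n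
  calc f t = f (t - (n:ℝ)*T) := heq.symm
  _ ≤ f t₀ := ht₀ hmem

private lemma mem_window {T : ℝ} (hT : 0 < T) (t₁ t : ℝ) :
    ∃ n : ℤ, t - (n:ℝ) * T ∈ Icc t₁ (t₁ + T) := by
  refine ⟨⌊(t - t₁)/T⌋, ?_, ?_⟩
  · have := Int.floor_le ((t - t₁)/T)
    have h3 : (⌊(t - t₁)/T⌋ : ℝ) * T ≤ ((t-t₁)/T) * T := by nlinarith
    have h4 : ((t-t₁)/T)*T = t - t₁ := by field_simp
    linarith [h3.trans_eq h4]
  · have := Int.lt_floor_add_one ((t - t₁)/T)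
    have h4 : ((t-t₁)/T)*T = t - t₁ := by field_simp
    nlinarith

set_option maxHeartbeats 2000000 in
theorem statement7
    (T : ℝ) (hT : 0 < T)
    (h : ℝ → ℝ → ℝ) (hhc : Continuous (Function.uncurry h))
    (hhper : ∀ t s : ℝ, h (t + T) s = h t s)
    (hh0 : ∀ t : ℝ, h t 0 = 0)
    (hh1 : ∀ t : ℝ, StrictMono (h t))
    (a : ℝ → ℝ) (hac : Continuous a)
    (haper : Function.Periodic a T)
    (haneg : (∫ t in (0:ℝ)..T, a t) < 0)
    (g : ℝ → ℝ)
    (hg0 : g 0 = 0) (hgpos : ∀ s : ℝ, 0 < s → 0 < g s)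
    -- `g` is continuously differentiable in a right neighborhood of zero
    (hgdiff : ∃ δ : ℝ, 0 < δ ∧ ContDiffOn ℝ 1 g (Set.Ioo 0 δ))
    -- `limsup_{s→0⁺} g'(s)·s/g(s) ≤ C_g` for some constant `C_g ≥ 0`
    (Cg : ℝ) (hCg : 0 ≤ Cg)
    (hlimsup : ∀ ε : ℝ, 0 < ε → ∀ᶠ s in nhdsWithin 0 (Set.Ioi (0:ℝ)),
      deriv g s * s / g s ≤ Cg + ε)
    (hzero : ∀ K : ℝ, TendstoUniformly (fun s t => h t (K * g s) / s)
      (fun _ => 0) (nhdsWithin 0 (Set.Ioi 0))) :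
    ∃ r₀ : ℝ, 0 < r₀ ∧ ∀ r : ℝ, 0 < r → r ≤ r₀ → ∀ θ : ℝ, 0 < θ → θ ≤ 1 →
      ¬ ∃ u v : ℝ → ℝ,
        IsPeriodicSol T (fun t s => θ * h t s) (fun t x => -(θ * a t * g x)) u v ∧
        (∀ t, 0 < u t) ∧ (∀ t, u t ≤ r) ∧ (∃ t, u t = r) := by
  -- extraction helper
  have nhd : ∀ {p : ℝ → Prop}, (∀ᶠ s in nhdsWithin 0 (Ioi (0:ℝ)), p s) →
      ∃ d, 0 < d ∧ ∀ s, 0 < s → s < d → p s := by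
    intro p hp
    rw [eventually_nhdsWithin_iff, Metric.eventually_nhds_iff] at hp
    obtain ⟨d, hd, H⟩ := hp
    exact ⟨d, hd, fun s hs hsd =>
      H (by rw [Real.dist_eq, sub_zero, abs_of_pos hs]; exact hsd) hs⟩
  obtain ⟨δ, hδpos, hgC1⟩ := hgdiff
  set C := Cg + 1 with hCdef
  have hCpos : 0 < C := by simp only [hCdef]; linarith
  obtain ⟨δ₁, hδ₁pos, hδ₁⟩ := nhd (hlimsup 1 one_pos)
  set δ₂ := min δ δ₁ with hδ₂def
  have hδ₂pos : 0 < δ₂ := lt_min hδpos hδ₁pos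
  have hδ₂δ : δ₂ ≤ δ := min_le_left _ _
  have hδ₂δ₁ : δ₂ ≤ δ₁ := min_le_right _ _
  -- derivative facts for g
  have hgderiv : ∀ x ∈ Ioo (0:ℝ) δ, HasDerivAt g (deriv g x) x := fun x hx =>
    ((hgC1.differentiableOn one_ne_zero).differentiableAt (isOpen_Ioo.mem_nhds hx)).hasDerivAt
  have hgderivcont : ContinuousOn (deriv g) (Ioo (0:ℝ) δ) :=
    hgC1.continuousOn_deriv_of_isOpen isOpen_Ioo le_rfl
  have hslope : ∀ x, 0 < x → x < δ₂ → deriv g x ≤ C * g x / x := by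
    intro x hx hxδ
    have h1 := hδ₁ x hx (lt_of_lt_of_le hxδ hδ₂δ₁)
    have hg : 0 < g x := hgpos x hx
    rw [div_le_iff₀ (by positivity)] at h1
    rw [le_div_iff₀ hx, hCdef]
    linarith
  set D := Real.exp (C * Real.log 2) with hDdef
  have hDpos : 0 < D := Real.exp_pos _
  have hD1 : 1 ≤ D := by
    rw [hDdef, show (1:ℝ) = Real.exp 0 by simp]
    exact Real.exp_le_exp.2 (by positivity)
  -- comparison lemma
  have hcomp : ∀ x y : ℝ, 0 < x → x ≤ y → y < δ₂ → y ≤ 2*x → g y ≤ D * g x := by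
    intro x y hx hxy hyδ hy2x
    rcases eq_or_lt_of_le hxy with rfl | hxy
    · nlinarith [hgpos x hx]
    have hy : 0 < y := hx.trans hxy
    have hgx : 0 < g x := hgpos x hx
    have hgy : 0 < g y := hgpos y hy
    set f := fun s => Real.log (g s) - C * Real.log s with hfdef
    have hfd : ∀ s, 0 < s → s < δ₂ → HasDerivAt f (deriv g s / g s - C * (1/s)) s := by
      intro s hs hsδ
      have h1 : HasDerivAt g (deriv g s) s := hgderiv s ⟨hs, lt_of_lt_of_le hsδ hδ₂δ⟩
      have h2 : HasDerivAt (fun s => Real.log (g s)) (deriv g s / g s) s :=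
        h1.log (hgpos s hs).ne'
      have h3 : HasDerivAt (fun s => C * Real.log s) (C * (1/s)) s :=
        ((Real.hasDerivAt_log hs.ne').const_mul C).congr_deriv (by ring)
      exact h2.sub h3
    have hmvt := exists_hasDerivAt_eq_slope f (fun s => deriv g s / g s - C * (1/s)) hxy
      (fun s hs => ((hfd s (lt_of_lt_of_le hx hs.1) (lt_of_le_of_lt hs.2 hyδ)).continuousAt).continuousWithinAt)
      (fun s hs => hfd s (hx.trans hs.1) (hs.2.trans hyδ))
    obtain ⟨c, hc, hceq⟩ := hmvt
    have hcpos : 0 < c := hx.trans hc.1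
    have hcδ : c < δ₂ := hc.2.trans hyδ
    have hder : deriv g c / g c - C * (1/c) ≤ 0 := by
      have := hslope c hcpos hcδ
      have hgc : 0 < g c := hgpos c hcpos
      rw [sub_nonpos, div_le_iff₀ hgc]
      calc deriv g c ≤ C * g c / c := this
      _ = C * (1/c) * g c := by ring
    have hfy : f y ≤ f x := by
      have : (f y - f x) / (y - x) ≤ 0 := hceq ▸ hder
      have hyx : 0 < y - x := by linarith
      rcases div_nonpos_iff.mp this with ⟨h8, h9⟩ | ⟨h8, h9⟩
      · linarith
      · linarith
    have hlog : Real.log (g y) ≤ Real.log (g x) + C * Real.log 2 := by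
      have h4 : Real.log y - Real.log x ≤ Real.log 2 := by
        rw [← Real.log_div hy.ne' hx.ne']
        exact Real.log_le_log (by positivity) (by rw [div_le_iff₀ hx]; linarith)
      simp only [hfdef] at hfy
      nlinarith [hCpos]
    calc g y = Real.exp (Real.log (g y)) := (Real.exp_log hgy).symm
    _ ≤ Real.exp (Real.log (g x) + C * Real.log 2) := Real.exp_le_exp.2 hlog
    _ = g x * D := by rw [Real.exp_add, Real.exp_log hgx, hDdef]
    _ = D * g x := by ring
  -- constants
  set κ := -∫ t in (0:ℝ)..T, a t with hκdef
  have hκpos : 0 < κ := by simp only [hκdef]; linarith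
  set A := ∫ t in (0:ℝ)..T, |a t| with hAdef
  have hκA : κ ≤ A := by
    have h1 := intervalIntegral.abs_integral_le_integral_abs (μ := volume) (f := a) hT.le
    have h2 : κ ≤ |∫ t in (0:ℝ)..T, a t| := by
      rw [hκdef]; exact neg_le_abs _
    exact h2.trans h1
  have hApos : 0 < A := lt_of_lt_of_le hκpos hκA
  set ε := min (κ / (4*(A*(C*(D*T))))) (1/(2*T)) with hεdef
  have hεpos : 0 < ε := lt_min (by positivity) (by positivity)
  have hε1 : ε ≤ κ / (4*(A*(C*(D*T)))) := min_le_left _ _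
  have hε2 : ε ≤ 1/(2*T) := min_le_right _ _
  obtain ⟨sA, hsApos, hsA⟩ := nhd (Metric.tendstoUniformly_iff.mp (hzero A) ε hεpos)
  obtain ⟨sB, hsBpos, hsB⟩ := nhd (Metric.tendstoUniformly_iff.mp (hzero (-A)) ε hεpos)
  set s₀ := min sA sB with hs₀def
  have hs₀pos : 0 < s₀ := lt_min hsApos hsBpos
  refine ⟨min δ₂ s₀ / 2, by positivity, ?_⟩
  intro r hr hrr₀ θ hθ hθ1
  rintro ⟨u, v, ⟨hu, hv, huT, hvT, hFint, hGint, huEq, hvEq⟩, hupos, hur, t₁, hut₁⟩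
  have hrδ₂ : r < δ₂ := by
    have h1 : min δ₂ s₀ ≤ δ₂ := min_le_left _ _
    have h2 : 0 < min δ₂ s₀ := lt_min hδ₂pos hs₀pos
    linarith only [h1, h2, hrr₀]
  have hrs₀ : r < s₀ := by
    have h1 : min δ₂ s₀ ≤ s₀ := min_le_right _ _
    have h2 : 0 < min δ₂ s₀ := lt_min hδ₂pos hs₀pos
    linarith only [h1, h2, hrr₀]
  -- basic solution facts
  have huIoo : ∀ t, u t ∈ Ioo (0:ℝ) δ₂ := fun t => ⟨hupos t, lt_of_le_of_lt (hur t) hrδ₂⟩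
  have huIooδ : ∀ t, u t ∈ Ioo (0:ℝ) δ := fun t => ⟨hupos t, lt_of_lt_of_le (huIoo t).2 hδ₂δ⟩
  have hψc : Continuous (fun t => g (u t)) :=
    hgC1.continuousOn.comp_continuous hu huIooδ
  have hvdc : Continuous (fun t => -(θ * a t * g (u t))) :=
    ((continuous_const.mul hac).mul hψc).neg
  have hhvc : Continuous (fun t => h t (v t)) := hhc.comp (continuous_id.prodMk hv)
  have hudc : Continuous (fun t => θ * h t (v t)) := continuous_const.mul hhvc
  have smaf : ∀ (f : ℝ → ℝ), Continuous f → ∀ (x : ℝ),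
      StronglyMeasurableAtFilter f (nhds x) volume := fun f hf x =>
    ⟨univ, univ_mem, hf.aestronglyMeasurable.restrict⟩
  have hud : ∀ t, HasDerivAt u (θ * h t (v t)) t := by
    intro t
    have h1 : HasDerivAt (fun t => ∫ s in (0:ℝ)..t, θ * h s (v s)) (θ * h t (v t)) t :=
      intervalIntegral.integral_hasDerivAt_right (hudc.intervalIntegrable _ _)
        (smaf _ hudc t) hudc.continuousAt
    have h2 : u = fun t => u 0 + ∫ s in (0:ℝ)..t, θ * h s (v s) := funext huEq
    rw [h2]
    exact h1.const_add (u 0)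
  have hvd : ∀ t, HasDerivAt v (-(θ * a t * g (u t))) t := by
    intro t
    have h1 : HasDerivAt (fun t => ∫ s in (0:ℝ)..t, -(θ * a s * g (u s)))
        (-(θ * a t * g (u t))) t :=
      intervalIntegral.integral_hasDerivAt_right (hvdc.intervalIntegrable _ _)
        (smaf _ hvdc t) hvdc.continuousAt
    have h2 : v = fun t => v 0 + ∫ s in (0:ℝ)..t, -(θ * a s * g (u s)) := funext hvEq
    rw [h2]
    exact h1.const_add (v 0)
  -- periodicity of auxiliary functions
  have hψper : Function.Periodic (fun t => g (u t)) T := fun t => congrArg g (huT t)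
  have haabs : Function.Periodic (fun t => |a t|) T := fun t => congrArg abs (haper t)
  -- max of ψ
  obtain ⟨tσ, htσ⟩ := periodic_max hT hψc hψper
  set σ := u tσ with hσdef
  have hσpos : 0 < σ := hupos tσ
  have hσr : σ ≤ r := hur tσ
  have hgσpos : 0 < g σ := hgpos σ hσpos
  -- min of u
  obtain ⟨tm, htm⟩ := periodic_max hT hu.neg (fun t => congrArg Neg.neg (huT t))
  set m := u tm with hmdef
  have hmle : ∀ t, m ≤ u t := fun t => by have := htm t; simp only [Pi.neg_apply] at this; linarith only [this]
  have hmpos : 0 < m := hupos tm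
  have hmr : m ≤ r := hur tm
  have hmIoo : m ∈ Ioo (0:ℝ) δ₂ := huIoo tm
  -- v vanishes at the max point t₁
  have hvt₁ : v t₁ = 0 := by
    have hmax : IsLocalMax u t₁ := Filter.Eventually.of_forall (fun t => hut₁ ▸ hur t)
    have h1 : θ * h t₁ (v t₁) = 0 := hmax.hasDerivAt_eq_zero (hud t₁)
    have h2 : h t₁ (v t₁) = 0 := by
      rcases mul_eq_zero.mp h1 with h | h
      · exact absurd h hθ.ne'
      · exact h
    exact (hh1 t₁).injective (h2.trans (hh0 t₁).symm)
  -- bound on v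
  have hvb : ∀ t, |v t| ≤ θ * (A * g σ) := by
    have base : ∀ t ∈ Icc t₁ (t₁ + T), |v t| ≤ θ * (A * g σ) := by
      intro t ht
      have hvt : v t = ∫ s in t₁..t, -(θ * a s * g (u s)) := by
        have e1 := hvEq t
        have e2 := hvEq t₁
        have e3 : v t - v t₁ = (∫ s in (0:ℝ)..t, -(θ * a s * g (u s)))
            - ∫ s in (0:ℝ)..t₁, -(θ * a s * g (u s)) := by rw [e1, e2]; ring
        rw [hvt₁, sub_zero] at e3
        rw [e3, ← intervalIntegral.integral_interval_sub_left
          (hvdc.intervalIntegrable 0 t) (hvdc.intervalIntegrable 0 t₁)]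
      have habs : |v t| ≤ ∫ s in t₁..t, |(-(θ * a s * g (u s)))| := by
        rw [hvt]
        exact intervalIntegral.abs_integral_le_integral_abs ht.1
      have hmono : (∫ s in t₁..t, |(-(θ * a s * g (u s)))|)
          ≤ ∫ s in t₁..(t₁+T), |(-(θ * a s * g (u s)))| := by
        rw [← intervalIntegral.integral_add_adjacent_intervals
          ((hvdc.abs).intervalIntegrable t₁ t) ((hvdc.abs).intervalIntegrable t (t₁+T))]
        have : 0 ≤ ∫ s in t..(t₁+T), |(-(θ * a s * g (u s)))| :=
          intervalIntegral.integral_nonneg ht.2 (fun x _ => abs_nonneg _)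
        linarith only [this]
      have hptw : (∫ s in t₁..(t₁+T), |(-(θ * a s * g (u s)))|)
          ≤ ∫ s in t₁..(t₁+T), |a s| * (θ * g σ) := by
        apply intervalIntegral.integral_mono_on (by linarith only [hT]) ((hvdc.abs).intervalIntegrable _ _)
          ((hac.abs.mul continuous_const).intervalIntegrable _ _)
        intro x _
        have h1 : |(-(θ * a x * g (u x)))| = θ * |a x| * g (u x) := by
          rw [abs_neg, abs_mul, abs_mul, abs_of_pos hθ,
            abs_of_pos (hgpos _ (hupos x))]
        rw [h1]
        have h2 : g (u x) ≤ g σ := htσ x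
        have h3 := mul_nonneg (mul_nonneg hθ.le (abs_nonneg (a x))) (sub_nonneg.mpr h2)
        show θ * |a x| * g (u x) ≤ |a x| * (θ * g σ)
        linarith only [h3]
      have hshift : (∫ s in t₁..(t₁+T), |a s| * (θ * g σ)) = A * (θ * g σ) := by
        rw [intervalIntegral.integral_mul_const]
        have := (haabs.intervalIntegral_add_eq t₁ 0)
        rw [this, zero_add, ← hAdef]
      calc |v t| ≤ _ := habs
      _ ≤ _ := hmono
      _ ≤ _ := hptw
      _ = A * (θ * g σ) := hshift
      _ = θ * (A * g σ) := by ring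
    intro t
    obtain ⟨n, hn⟩ := mem_window hT t₁ t
    have := hvT.sub_int_mul_eq (x := t) n
    rw [← this]
    exact base _ hn
  -- bound on h t (v t)
  have hhb : ∀ t, |h t (v t)| ≤ ε * σ := by
    intro t
    have hσs₀ : σ < s₀ := lt_of_le_of_lt hσr hrs₀
    have hA1 : ∀ τ, |h τ (A * g σ)| < ε * σ := by
      intro τ
      have := hsA σ hσpos (lt_of_lt_of_le hσs₀ (min_le_left _ _)) τ
      rw [dist_eq_norm, zero_sub, norm_neg, Real.norm_eq_abs, abs_div,
        abs_of_pos hσpos, div_lt_iff₀ hσpos] at this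
      exact this
    have hA2 : ∀ τ, |h τ (-(A * g σ))| < ε * σ := by
      intro τ
      have := hsB σ hσpos (lt_of_lt_of_le hσs₀ (min_le_right _ _)) τ
      rw [dist_eq_norm, zero_sub, norm_neg, Real.norm_eq_abs, abs_div,
        abs_of_pos hσpos, div_lt_iff₀ hσpos] at this
      rw [show -A * g σ = -(A * g σ) by ring] at this
      exact this
    have hAg : θ * (A * g σ) ≤ A * g σ := by
      have hexp := mul_nonneg (by linarith only [hθ1] : (0:ℝ) ≤ 1 - θ) (mul_pos hApos hgσpos).le
      linarith only [hexp]
    have hb1 : v t ≤ A * g σ := (abs_le.mp ((hvb t).trans hAg)).2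
    have hb2 : -(A * g σ) ≤ v t := (abs_le.mp ((hvb t).trans hAg)).1
    rw [abs_le]
    constructor
    · calc -(ε * σ) ≤ -|h t (-(A * g σ))| := by linarith only [(hA2 t).le]
      _ ≤ h t (-(A * g σ)) := neg_abs_le _
      _ ≤ h t (v t) := (hh1 t).monotone hb2
    · calc h t (v t) ≤ h t (A * g σ) := (hh1 t).monotone hb1
      _ ≤ |h t (A * g σ)| := le_abs_self _
      _ ≤ ε * σ := (hA1 t).le
  -- smallness of r - m
  have hrm : r - m ≤ θ * (ε * σ) * T := by
    obtain ⟨n, hn⟩ := mem_window hT t₁ tm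
    set tm' := tm - (n:ℝ) * T with htm'def
    have hum : u tm' = m := huT.sub_int_mul_eq n
    have e3 : u tm' - u t₁ = ∫ s in t₁..tm', θ * h s (v s) := by
      rw [huEq tm', huEq t₁, ← intervalIntegral.integral_interval_sub_left
        (hudc.intervalIntegrable 0 tm') (hudc.intervalIntegrable 0 t₁)]
      ring
    have e4 : |∫ s in t₁..tm', θ * h s (v s)| ≤ (θ * (ε * σ)) * |tm' - t₁| := by
      have := intervalIntegral.norm_integral_le_of_norm_le_const
        (f := fun s => θ * h s (v s)) (a := t₁) (b := tm') (C := θ * (ε * σ)) ?_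
      · exact this
      · intro x _
        rw [Real.norm_eq_abs, abs_mul, abs_of_pos hθ]
        have hexp := mul_nonneg hθ.le (sub_nonneg.mpr (hhb x))
        linarith only [hexp]
    have e5 : |tm' - t₁| ≤ T := by
      rw [abs_le]; constructor <;> [linarith only [hn.1, hn.2, hT]; linarith only [hn.1, hn.2, hT]]
    have e6 : r - m ≤ |∫ s in t₁..tm', θ * h s (v s)| := by
      rw [← e3, hum, hut₁]
      calc r - m ≤ |r - m| := le_abs_self _
      _ = |m - r| := abs_sub_comm _ _
      _ = _ := rfl
    calc r - m ≤ (θ * (ε * σ)) * |tm' - t₁| := e6.trans e4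
    _ ≤ θ * (ε * σ) * T := mul_le_mul_of_nonneg_left e5 (by positivity)
  have hεT : ε * T ≤ 1/2 := by
    have h0 : ε * (2*T) ≤ 1 := (le_div_iff₀ (by linarith only [hT])).mp hε2
    linarith only [h0]
  have hr2m : r ≤ 2 * m := by
    have a1 : θ * (ε * σ) ≤ ε * σ := by
      have hexp := mul_nonneg (by linarith only [hθ1] : (0:ℝ) ≤ 1 - θ) (mul_pos hεpos hσpos).le
      linarith only [hexp]
    have a2 : ε * σ ≤ ε * r := mul_le_mul_of_nonneg_left hσr hεpos.le
    have h1 : θ * (ε * σ) * T ≤ ε * r * T :=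
      mul_le_mul_of_nonneg_right (a1.trans a2) hT.le
    have h2 : ε * r * T ≤ r / 2 := by
      have h3 : r * (ε * T) ≤ r * (1/2) := mul_le_mul_of_nonneg_left hεT hr.le
      linarith only [h3]
    linarith only [hrm, h1, h2]
  -- primitives P and N of the positive/negative parts of (deriv g)/g^2
  have hsub' : Ioo (0:ℝ) δ₂ ⊆ Ioo 0 δ := Ioo_subset_Ioo le_rfl hδ₂δ
  have hgne : ∀ x, x ∈ Ioo (0:ℝ) δ₂ → g x ≠ 0 := fun x hx => (hgpos x hx.1).ne'
  set q : ℝ → ℝ := fun x => max (deriv g x) 0 / (g x)^2 with hqdef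
  set w : ℝ → ℝ := fun x => max (-(deriv g x)) 0 / (g x)^2 with hwdef
  have hqcont : ContinuousOn q (Ioo (0:ℝ) δ₂) := by
    apply ContinuousOn.div
    · exact fun x hx => ((hgderivcont.mono hsub') x hx).max continuousWithinAt_const
    · exact (hgC1.continuousOn.mono hsub').pow 2
    · intro x hx; exact pow_ne_zero 2 (hgne x hx)
  have hwcont : ContinuousOn w (Ioo (0:ℝ) δ₂) := by
    apply ContinuousOn.div
    · exact fun x hx => (((hgderivcont.mono hsub').neg) x hx).max continuousWithinAt_const
    · exact (hgC1.continuousOn.mono hsub').pow 2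
    · intro x hx; exact pow_ne_zero 2 (hgne x hx)
  have hIccsub : ∀ y ∈ Ioo (0:ℝ) δ₂, uIcc m y ⊆ Ioo (0:ℝ) δ₂ := by
    intro y hy z hz
    rcases Set.mem_uIcc.mp hz with ⟨h1,h2⟩|⟨h1,h2⟩
    · exact ⟨lt_of_lt_of_le hmIoo.1 h1, lt_of_le_of_lt h2 hy.2⟩
    · exact ⟨lt_of_lt_of_le hy.1 h1, lt_of_le_of_lt h2 hmIoo.2⟩
  have hqint : ∀ y ∈ Ioo (0:ℝ) δ₂, IntervalIntegrable q volume m y :=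
    fun y hy => (hqcont.mono (hIccsub y hy)).intervalIntegrable
  have hwint : ∀ y ∈ Ioo (0:ℝ) δ₂, IntervalIntegrable w volume m y :=
    fun y hy => (hwcont.mono (hIccsub y hy)).intervalIntegrable
  set P : ℝ → ℝ := fun y => ∫ x in m..y, q x with hPdef
  set N : ℝ → ℝ := fun y => ∫ x in m..y, w x with hNdef
  have hPderiv : ∀ y ∈ Ioo (0:ℝ) δ₂, HasDerivAt P (q y) y := fun y hy =>
    intervalIntegral.integral_hasDerivAt_right (hqint y hy)
      ⟨Ioo (0:ℝ) δ₂, isOpen_Ioo.mem_nhds hy, (hqcont.aestronglyMeasurable measurableSet_Ioo)⟩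
      (hqcont.continuousAt (isOpen_Ioo.mem_nhds hy))
  have hNderiv : ∀ y ∈ Ioo (0:ℝ) δ₂, HasDerivAt N (w y) y := fun y hy =>
    intervalIntegral.integral_hasDerivAt_right (hwint y hy)
      ⟨Ioo (0:ℝ) δ₂, isOpen_Ioo.mem_nhds hy, (hwcont.aestronglyMeasurable measurableSet_Ioo)⟩
      (hwcont.continuousAt (isOpen_Ioo.mem_nhds hy))
  have hPuc : Continuous (fun t => P (u t)) := continuous_iff_continuousAt.mpr
    (fun t => ((hPderiv (u t) (huIoo t)).continuousAt).comp hu.continuousAt)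
  have hNuc : Continuous (fun t => N (u t)) := continuous_iff_continuousAt.mpr
    (fun t => ((hNderiv (u t) (huIoo t)).continuousAt).comp hu.continuousAt)
  have hwuc : Continuous (fun t => w (u t)) := continuous_iff_continuousAt.mpr
    (fun t => (hwcont.continuousAt (isOpen_Ioo.mem_nhds (huIoo t))).comp hu.continuousAt)
  -- the inverse identity
  have hinv : ∀ t, (g (u t))⁻¹ = (g m)⁻¹ - P (u t) + N (u t) := by
    intro t
    have hyIoo : u t ∈ Ioo (0:ℝ) δ₂ := huIoo t
    have h1 : ∀ x ∈ uIcc m (u t), HasDerivAt (fun y => (g y)⁻¹) (w x - q x) x := by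
      intro x hx
      have hxI : x ∈ Ioo (0:ℝ) δ₂ := hIccsub _ hyIoo hx
      have h2 : HasDerivAt g (deriv g x) x := hgderiv x (hsub' hxI)
      have h3 := h2.inv (hgne x hxI)
      convert h3 using 1
      show w x - q x = -(deriv g x) / g x ^ 2
      rw [hwdef, hqdef]
      simp only []
      rw [div_sub_div_same]
      congr 1
      rcases le_total (deriv g x) 0 with hd | hd
      · rw [max_eq_left (by linarith only [hd]), max_eq_right hd]; ring
      · rw [max_eq_right (by linarith only [hd]), max_eq_left hd]; ring
      all_goals rfl
    have h4 : IntervalIntegrable (fun x => w x - q x) volume m (u t) :=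
      (((hwcont.mono (hIccsub _ hyIoo)).sub (hqcont.mono (hIccsub _ hyIoo)))).intervalIntegrable
    have hftc : ∫ x in m..(u t), (w x - q x) = (g (u t))⁻¹ - (g m)⁻¹ :=
      intervalIntegral.integral_eq_sub_of_hasDerivAt h1 h4
    have h5 : ∫ x in m..(u t), (w x - q x) = N (u t) - P (u t) :=
      intervalIntegral.integral_sub (hwint _ hyIoo) (hqint _ hyIoo)
    rw [h5] at hftc
    linarith only [hftc]
  have hq0 : ∀ x, 0 ≤ q x := fun x => div_nonneg (le_max_right _ _) (sq_nonneg _)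
  have hw0 : ∀ x, 0 ≤ w x := fun x => div_nonneg (le_max_right _ _) (sq_nonneg _)
  have hP0 : ∀ t, 0 ≤ P (u t) := fun t =>
    intervalIntegral.integral_nonneg (hmle t) (fun x _ => hq0 x)
  -- pointwise bound on g(u t) * P(u t)
  have hgP : ∀ t, g (u t) * P (u t) ≤ C * D * ((r - m)/m) := by
    intro t
    have hyI := huIoo t
    have hgu := hgpos _ (hupos t)
    have hbq : ∀ x ∈ Set.uIoc m (u t), ‖q x‖ ≤ C * D / (m * g (u t)) := by
      intro x hx
      rw [Set.uIoc_of_le (hmle t)] at hx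
      have hx0 : 0 < x := hmpos.trans hx.1
      have hxδ : x < δ₂ := lt_of_le_of_lt hx.2 hyI.2
      have hgx := hgpos x hx0
      have hcmp : g (u t) ≤ D * g x := by
        apply hcomp x (u t) hx0 hx.2 hyI.2
        have h6 : u t ≤ r := hur t
        have h7 : m ≤ x := hx.1.le
        linarith only [h6, h7, hr2m]
      have hqb : q x ≤ C / (x * g x) := by
        have hmax : max (deriv g x) 0 ≤ C * g x / x := by
          apply max_le (hslope x hx0 hxδ) (by positivity)
        calc q x ≤ (C * g x / x)/(g x^2) := (div_le_div_iff_of_pos_right (pow_pos hgx 2)).mpr hmax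
        _ = C / (x * g x) := by field_simp
      have h8 : C/(x * g x) ≤ C * D/(m * g (u t)) := by
        rw [div_le_div_iff₀ (by positivity) (by positivity)]
        have h9 : m * g (u t) ≤ x * (D * g x) :=
          mul_le_mul hx.1.le hcmp hgu.le hx0.le
        calc C * (m * g (u t)) ≤ C * (x * (D * g x)) :=
          mul_le_mul_of_nonneg_left h9 hCpos.le
        _ = C * D * (x * g x) := by ring
      rw [Real.norm_eq_abs, abs_of_nonneg (hq0 x)]
      exact hqb.trans h8
    have hPb : P (u t) ≤ (C * D / (m * g (u t))) * (u t - m) := by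
      have h6 := intervalIntegral.norm_integral_le_of_norm_le_const hbq
      rw [Real.norm_eq_abs] at h6
      have h7 : |u t - m| = u t - m := abs_of_nonneg (by linarith only [hmle t])
      calc P (u t) ≤ |P (u t)| := le_abs_self _
      _ ≤ C * D / (m * g (u t)) * |u t - m| := h6
      _ = _ := by rw [h7]
    calc g (u t) * P (u t) ≤ g (u t) * ((C * D / (m * g (u t))) * (u t - m)) :=
      mul_le_mul_of_nonneg_left hPb hgu.le
    _ = C * D * ((u t - m)/m) := by field_simp
    _ ≤ C * D * ((r - m)/m) := by
      apply mul_le_mul_of_nonneg_left _ (by positivity)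
      exact (div_le_div_iff_of_pos_right hmpos).mpr (by linarith only [hur t])
  -- the master identity
  have hgm := hgpos m hmpos
  have huT0 : u T = u 0 := by have := huT 0; rwa [zero_add] at this
  have hvT0 : v T = v 0 := by have := hvT 0; rwa [zero_add] at this
  have hint1 : (∫ t in (0:ℝ)..T, -(θ * a t * g (u t))) = 0 := by
    rw [intervalIntegral.integral_eq_sub_of_hasDerivAt (fun t _ => hvd t)
      (hvdc.intervalIntegrable _ _), hvT0, sub_self]
  have hκT : θ * κ = -(∫ t in (0:ℝ)..T, (-(θ * a t * g (u t))) * P (u t))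
      + ∫ t in (0:ℝ)..T, (-(θ * a t * g (u t))) * N (u t) := by
    have hptws : (fun t => -(θ * a t)) = (fun t => (-(θ * a t * g (u t))) * (g m)⁻¹
        - (-(θ * a t * g (u t))) * P (u t) + (-(θ * a t * g (u t))) * N (u t)) := by
      funext t
      have hgut := hgpos _ (hupos t)
      have h8 : -(θ * a t) = (-(θ * a t * g (u t))) * (g (u t))⁻¹ := by
        field_simp
      calc -(θ * a t) = (-(θ * a t * g (u t))) * (g (u t))⁻¹ := h8
      _ = (-(θ * a t * g (u t))) * ((g m)⁻¹ - P (u t) + N (u t)) := by rw [hinv t]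
      _ = _ := by ring
    have lhs : θ * κ = ∫ t in (0:ℝ)..T, -(θ * a t) := by
      have : (fun t => -(θ * a t)) = (fun t => (-θ) * a t) := by funext t; ring
      rw [this, intervalIntegral.integral_const_mul, hκdef]
      ring
    have i1 : IntervalIntegrable (fun t => (-(θ * a t * g (u t))) * (g m)⁻¹) volume 0 T :=
      (hvdc.mul continuous_const).intervalIntegrable _ _
    have i2 : IntervalIntegrable (fun t => (-(θ * a t * g (u t))) * P (u t)) volume 0 T :=
      (hvdc.mul hPuc).intervalIntegrable _ _
    have i3 : IntervalIntegrable (fun t => (-(θ * a t * g (u t))) * N (u t)) volume 0 T :=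
      (hvdc.mul hNuc).intervalIntegrable _ _
    rw [lhs, hptws, intervalIntegral.integral_add (i1.sub i2) i3,
      intervalIntegral.integral_sub i1 i2, intervalIntegral.integral_mul_const, hint1,
      zero_mul]
    ring
  -- second term is nonpositive (integration by parts)
  have hterm2 : (∫ t in (0:ℝ)..T, (-(θ * a t * g (u t))) * N (u t)) ≤ 0 := by
    have hNu : ∀ t : ℝ, HasDerivAt (fun t => N (u t)) (w (u t) * (θ * h t (v t))) t :=
      fun t => (hNderiv (u t) (huIoo t)).comp t (hud t)
    have hW : ∀ t : ℝ, HasDerivAt (fun t => v t * N (u t))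
        ((-(θ * a t * g (u t))) * N (u t) + v t * (w (u t) * (θ * h t (v t)))) t :=
      fun t => (hvd t).mul (hNu t)
    have cB : Continuous (fun t => v t * (w (u t) * (θ * h t (v t)))) :=
      hv.mul (hwuc.mul hudc)
    have hWint : (∫ t in (0:ℝ)..T, ((-(θ * a t * g (u t))) * N (u t)
        + v t * (w (u t) * (θ * h t (v t))))) = 0 := by
      rw [intervalIntegral.integral_eq_sub_of_hasDerivAt (fun t _ => hW t)
        (((hvdc.mul hNuc).add cB).intervalIntegrable _ _)]
      rw [hvT0, huT0, sub_self]
    have hsplit : (∫ t in (0:ℝ)..T, ((-(θ * a t * g (u t))) * N (u t)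
        + v t * (w (u t) * (θ * h t (v t)))))
        = (∫ t in (0:ℝ)..T, (-(θ * a t * g (u t))) * N (u t))
          + ∫ t in (0:ℝ)..T, v t * (w (u t) * (θ * h t (v t))) :=
      intervalIntegral.integral_add ((hvdc.mul hNuc).intervalIntegrable _ _)
        (cB.intervalIntegrable _ _)
    have hB0 : 0 ≤ ∫ t in (0:ℝ)..T, v t * (w (u t) * (θ * h t (v t))) := by
      apply intervalIntegral.integral_nonneg hT.le
      intro x _
      have hvh : 0 ≤ v x * h x (v x) := by
        rcases le_total 0 (v x) with hv0 | hv0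
        · have h9 : h x 0 ≤ h x (v x) := (hh1 x).monotone hv0
          rw [hh0] at h9
          exact mul_nonneg hv0 h9
        · have h9 : h x (v x) ≤ h x 0 := (hh1 x).monotone hv0
          rw [hh0] at h9
          calc (0:ℝ) ≤ (-(v x)) * (-(h x (v x))) :=
            mul_nonneg (neg_nonneg.2 hv0) (neg_nonneg.2 h9)
          _ = v x * h x (v x) := by ring
      calc (0:ℝ) ≤ w (u x) * θ * (v x * h x (v x)) :=
        mul_nonneg (mul_nonneg (hw0 (u x)) hθ.le) hvh
      _ = v x * (w (u x) * (θ * h x (v x))) := by ring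
    rw [hsplit] at hWint
    linarith only [hWint, hB0]
  -- first term is small
  have hterm1 : -(∫ t in (0:ℝ)..T, (-(θ * a t * g (u t))) * P (u t))
      ≤ A * (θ * (C * D * ((r - m)/m))) := by
    have hswap : -(∫ t in (0:ℝ)..T, (-(θ * a t * g (u t))) * P (u t))
        = ∫ t in (0:ℝ)..T, (θ * a t * g (u t)) * P (u t) := by
      rw [← intervalIntegral.integral_neg]
      congr 1
      funext t
      ring
    rw [hswap]
    have hmono : (∫ t in (0:ℝ)..T, (θ * a t * g (u t)) * P (u t))
        ≤ ∫ t in (0:ℝ)..T, |a t| * (θ * (C * D * ((r - m)/m))) := by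
      apply intervalIntegral.integral_mono_on hT.le
        ((((continuous_const.mul hac).mul hψc).mul hPuc).intervalIntegrable _ _)
        ((hac.abs.mul continuous_const).intervalIntegrable _ _)
      intro x _
      have hy0 : 0 ≤ g (u x) * P (u x) := mul_nonneg (hgpos _ (hupos x)).le (hP0 x)
      have h13 : a x * (g (u x) * P (u x)) ≤ |a x| * (g (u x) * P (u x)) :=
        mul_le_mul_of_nonneg_right (le_abs_self _) hy0
      have h14 : |a x| * (g (u x) * P (u x)) ≤ |a x| * (C * D * ((r - m)/m)) :=
        mul_le_mul_of_nonneg_left (hgP x) (abs_nonneg _)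
      calc (θ * a x * g (u x)) * P (u x) = θ * (a x * (g (u x) * P (u x))) := by ring
      _ ≤ θ * (|a x| * (C * D * ((r - m)/m))) :=
        mul_le_mul_of_nonneg_left (h13.trans h14) hθ.le
      _ = |a x| * (θ * (C * D * ((r - m)/m))) := by ring
    calc (∫ t in (0:ℝ)..T, (θ * a t * g (u t)) * P (u t)) ≤ _ := hmono
    _ = A * (θ * (C * D * ((r - m)/m))) := by
      rw [intervalIntegral.integral_mul_const, hAdef]
    _ ≤ _ := le_rfl
  -- conclusion
  have hfinal : θ * κ ≤ A * (θ * (C * D * ((r - m)/m))) := by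
    rw [hκT]; linarith only [hterm1, hterm2]
  have hκle : κ ≤ A * (C * D * ((r - m)/m)) := by
    have h16 : θ * κ ≤ θ * (A * (C * D * ((r - m)/m))) := by
      calc θ * κ ≤ A * (θ * (C * D * ((r - m)/m))) := hfinal
      _ = θ * (A * (C * D * ((r - m)/m))) := by ring
    exact le_of_mul_le_mul_left h16 hθ
  have h15 : (r - m)/m ≤ 2*(ε*T) := by
    rw [div_le_iff₀ hmpos]
    have a1 : θ * (ε * σ) ≤ ε * σ := by
      have hexp := mul_nonneg (by linarith only [hθ1] : (0:ℝ) ≤ 1 - θ) (mul_pos hεpos hσpos).le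
      linarith only [hexp]
    have a2 : ε * σ ≤ ε * r := mul_le_mul_of_nonneg_left hσr hεpos.le
    have a3 : ε * r ≤ ε * (2*m) := mul_le_mul_of_nonneg_left hr2m hεpos.le
    have h17 : θ * (ε*σ) * T ≤ ε * (2*m) * T :=
      mul_le_mul_of_nonneg_right ((a1.trans a2).trans a3) hT.le
    calc r - m ≤ θ * (ε * σ) * T := hrm
    _ ≤ ε * (2*m) * T := h17
    _ = 2*(ε*T)*m := by ring
  have h18 : κ ≤ 2*(ε*(A*(C*(D*T)))) := by
    calc κ ≤ A * (C * D * ((r - m)/m)) := hκle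
    _ ≤ A * (C * D * (2*(ε*T))) := by
      apply mul_le_mul_of_nonneg_left _ hApos.le
      exact mul_le_mul_of_nonneg_left h15 (by positivity)
    _ = 2*(ε*(A*(C*(D*T)))) := by ring
  have h19 : ε * (4*(A*(C*(D*T)))) ≤ κ := (le_div_iff₀ (by positivity)).mp hε1
  have hM : 0 < ε*(A*(C*(D*T))) := by positivity
  have h20 : ε * (4*(A*(C*(D*T)))) = 4*(ε*(A*(C*(D*T)))) := by ring
  rw [h20] at h19
  linarith only [h18, h19, hM]
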